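/- Let G be a finite group, A a finite set of size q ≥ 2, and H ≤ G. If the set B_{[H]} = {x ∈ A^G : G_x conjugate to H} is nonempty and consists of a single G-orbit, then q divides the index [G : H]. -/

import Mathlib

/-- The right action of `G` on configurations `A^G`: `(x · g) h = x (h g⁻¹)`. -/
def confMul {G A : Type*} [Group G] (x : G → A) (g : G) : G → A := fun h => x (h * g⁻¹)

/-- The `G`-orbit of a configuration `x ∈ A^G`. -/
def orbitOf {G A : Type*} [Group G] (x : G → A) : Set (G → A) := {y | ∃ g : G, y = confMul x g}

/-- The block `B_{[H]}` of configurations whose stabiliser is conjugate to `H`. -/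
def blockOf {G A : Type*} [Group G] (H : Subgroup G) : Set (G → A) :=
  {x | ∃ g : G, ∀ h : G, confMul x h = x ↔ g * h * g⁻¹ ∈ H}

/-- If the block `B_{[H]}` is nonempty and consists of a single `G`-orbit, then
`q = |A|` divides the index `[G : H]`. -/
theorem stmt19 {G A : Type*} [Group G] [Fintype G] [Fintype A]
    (hA : 2 ≤ Fintype.card A) (H : Subgroup G)
    (h1 : ∃ x : G → A, blockOf H = orbitOf x) :
    Fintype.card A ∣ H.index := by
  classical
  obtain ⟨x, hx⟩ := h1
  have hxmem : x ∈ blockOf H := by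
    rw [hx]; exact ⟨1, by funext h; simp [confMul]⟩
  obtain ⟨g₀, hg₀⟩ := hxmem
  set K : Subgroup G := H.comap (MulAut.conj g₀).toMonoidHom with hKdef
  have hKmem : ∀ h : G, h ∈ K ↔ g₀ * h * g₀⁻¹ ∈ H := fun h => by
    simp [hKdef, Subgroup.mem_comap, MulAut.conj_apply, mul_assoc]
  have hKindex : K.index = H.index :=
    Subgroup.index_comap_of_surjective H (MulAut.conj g₀).surjective
  -- x constant on left cosets of K
  have hconst : ∀ (g k : G), k ∈ K → x (g * k) = x g := by
    intro g k hk
    have := (hg₀ k).mpr ((hKmem k).mp hk)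
    have := congrFun this (g * k)
    simpa [confMul, mul_assoc] using this.symm
  -- fiber sizes are all equal
  have hfib : ∀ a b : A, Nat.card (x ⁻¹' {a}) = Nat.card (x ⁻¹' {b}) := by
    intro a b
    rcases eq_or_ne a b with rfl | hab
    · rfl
    · set σ := Equiv.swap a b
      have hy : (σ ∘ x) ∈ blockOf H := by
        refine ⟨g₀, fun h => ?_⟩
        rw [← hg₀ h]
        constructor
        · intro he
          funext g
          have := congrFun he g
          simpa [confMul] using σ.injective this
        · intro he
          funext g
          have := congrFun he g
          simp [confMul] at this ⊢
          rw [this]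
      rw [hx] at hy
      obtain ⟨g, hg⟩ := hy
      have h1 : (σ ∘ x) ⁻¹' {a} = x ⁻¹' {b} := by
        ext g'; simp [σ, Set.mem_preimage, Equiv.swap_apply_eq_iff, Equiv.swap_apply_left]
      have h2 : (confMul x g) ⁻¹' {a} = (Equiv.mulRight g⁻¹) ⁻¹' (x ⁻¹' {a}) := rfl
      have h3 : Nat.card ((Equiv.mulRight g⁻¹) ⁻¹' (x ⁻¹' {a})) = Nat.card (x ⁻¹' {a}) := by
        rw [← Equiv.image_symm_eq_preimage]
        exact Nat.card_image_of_injective (Equiv.injective _) _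
      calc Nat.card (x ⁻¹' {a}) = Nat.card ((Equiv.mulRight g⁻¹) ⁻¹' (x ⁻¹' {a})) := h3.symm
        _ = Nat.card ((σ ∘ x) ⁻¹' {a}) := by rw [← h2, ← hg]
        _ = Nat.card (x ⁻¹' {b}) := by rw [h1]
  -- card G = card A * fiber size
  obtain ⟨a₀⟩ : Nonempty A := Fintype.card_pos_iff.mp (by omega)
  have hsum : Nat.card G = Fintype.card A * Nat.card (x ⁻¹' {a₀}) := by
    rw [Nat.card_eq_fintype_card, ← Fintype.card_congr (Equiv.sigmaFiberEquiv x),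
      Fintype.card_sigma]
    have heq : ∀ a : A, Fintype.card {g // x g = a} = Nat.card (x ⁻¹' {a₀}) := by
      intro a
      rw [← Nat.card_eq_fintype_card]
      exact hfib a a₀
    simp only [heq, Finset.sum_const, Finset.card_univ, smul_eq_mul]
  -- fiber = preimage under mk of fiber of xbar
  have hwd : ∀ g g' : G, (QuotientGroup.mk g : G ⧸ K) = QuotientGroup.mk g' → x g = x g' := by
    intro g g' h
    have hk : g⁻¹ * g' ∈ K := QuotientGroup.leftRel_apply.mp (Quotient.exact h)
    have := hconst g _ hk
    simpa [mul_assoc] using this.symm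
  set xbar : G ⧸ K → A := Quotient.lift x (fun g g' h => hwd g g' (Quotient.sound h)) with hxbar
  have hfactor : x ⁻¹' {a₀} = QuotientGroup.mk ⁻¹' (xbar ⁻¹' {a₀}) := rfl
  have hcard : Nat.card (x ⁻¹' {a₀}) = Nat.card K * Nat.card (xbar ⁻¹' {a₀}) := by
    rw [hfactor, Nat.card_congr (QuotientGroup.preimageMkEquivSubgroupProdSet K _), Nat.card_prod]
  have hKG : Nat.card K * K.index = Nat.card G := Subgroup.card_mul_index K
  have hKpos : 0 < Nat.card K := Nat.card_pos
  have : Nat.card K * K.index = Fintype.card A * (Nat.card K * Nat.card (xbar ⁻¹' {a₀})) := by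
    rw [hKG, hsum, hcard]
  have : K.index = Fintype.card A * Nat.card (xbar ⁻¹' {a₀}) := by
    apply Nat.eq_of_mul_eq_mul_left hKpos
    rw [this]; ring
  rw [← hKindex, this]
  exact Dvd.intro _ rfl
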